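/- Let δ > 0 and let θ_k, θ̂ be real numbers with 0 < θ_k < θ̂ ≤ π/2. Define G(t) = 2√δ · arctan(√δ · t) − ln(1 + δ·t²)/t for t > 0. Then ∫_0^{θ_k} ln(1 + δ · sin²(θ̂ − θ)) · cos(θ̂ − θ)/sin²(θ̂ − θ) dθ = G(sin θ̂) − G(sin(θ̂ − θ_k)). -/

import Mathlib

open Real

/-- Theorem 2 (α = 2 case, equations (18), (15), (16)):
`∫_0^{θ_k} ln(1 + δ sin²(θ̂ − θ)) cos(θ̂ − θ)/sin²(θ̂ − θ) dθ = G(sin θ̂) − G(sin(θ̂ − θ_k))`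
where `G(t) = 2√δ arctan(√δ t) − ln(1 + δt²)/t`. -/
theorem stmt_9 (δ θk θhat : ℝ) (hδ : 0 < δ)
    (hθk : 0 < θk) (hlt : θk < θhat) (hθhat : θhat ≤ π / 2)
    (G : ℝ → ℝ)
    (hG : ∀ t : ℝ, 0 < t →
      G t = 2 * Real.sqrt δ * arctan (Real.sqrt δ * t) - Real.log (1 + δ * t ^ 2) / t) :
    ∫ θ in (0 : ℝ)..θk,
        Real.log (1 + δ * sin (θhat - θ) ^ 2) * (cos (θhat - θ) / sin (θhat - θ) ^ 2) =
      G (sin θhat) - G (sin (θhat - θk)) := by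
  -- sin (θhat - x) > 0 for x ∈ [0, θk]
  have hsinpos : ∀ x ∈ Set.Icc (0:ℝ) θk, 0 < sin (θhat - x) := by
    intro x hx
    apply Real.sin_pos_of_pos_of_lt_pi
    · linarith [hx.2]
    · have : θhat - x ≤ π / 2 := by linarith [hx.1]
      linarith [Real.pi_pos]
  have hsq : Real.sqrt δ * Real.sqrt δ = δ := Real.mul_self_sqrt hδ.le
  set F : ℝ → ℝ := fun θ =>
    -(2 * Real.sqrt δ * arctan (Real.sqrt δ * sin (θhat - θ)) -
      Real.log (1 + δ * sin (θhat - θ) ^ 2) / sin (θhat - θ)) with hF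
  have key : ∀ x ∈ Set.Icc (0:ℝ) θk,
      HasDerivAt F
        (Real.log (1 + δ * sin (θhat - x) ^ 2) * (cos (θhat - x) / sin (θhat - x) ^ 2)) x := by
    intro x hx
    have hs := hsinpos x hx
    set s := sin (θhat - x) with hsdef
    have hsne : s ≠ 0 := ne_of_gt hs
    have hpos : 0 < 1 + δ * s ^ 2 := by positivity
    have hne : 1 + δ * s ^ 2 ≠ 0 := ne_of_gt hpos
    -- derivative of inner function θ ↦ sin (θhat - θ)
    have hinner : HasDerivAt (fun θ : ℝ => θhat - θ) (-1 : ℝ) x := by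
      simpa using (hasDerivAt_id x).const_sub θhat
    have hsin : HasDerivAt (fun θ : ℝ => sin (θhat - θ)) (-cos (θhat - x)) x := by
      simpa [Function.comp_def] using (Real.hasDerivAt_sin (θhat - x)).comp x hinner
    -- arctan part
    have harctan : HasDerivAt (fun θ : ℝ => arctan (Real.sqrt δ * sin (θhat - θ)))
        (1 / (1 + (Real.sqrt δ * s) ^ 2) * (Real.sqrt δ * (-cos (θhat - x)))) x := by
      have h1 : HasDerivAt (fun θ : ℝ => Real.sqrt δ * sin (θhat - θ))
          (Real.sqrt δ * (-cos (θhat - x))) x := hsin.const_mul _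
      simpa [Function.comp_def] using (Real.hasDerivAt_arctan (Real.sqrt δ * s)).comp x h1
    -- log part
    have hlog : HasDerivAt (fun θ : ℝ => Real.log (1 + δ * sin (θhat - θ) ^ 2))
        ((δ * (2 * s * (-cos (θhat - x)))) / (1 + δ * s ^ 2)) x := by
      have h2 : HasDerivAt (fun θ : ℝ => sin (θhat - θ) ^ 2)
          (2 * s * (-cos (θhat - x))) x := by
        have := hsin.pow 2
        simpa [hsdef, mul_comm, mul_left_comm, mul_assoc, Pi.pow_def] using this
      have h3 : HasDerivAt (fun θ : ℝ => 1 + δ * sin (θhat - θ) ^ 2)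
          (δ * (2 * s * (-cos (θhat - x)))) x := (h2.const_mul δ).const_add 1
      simpa [div_eq_mul_inv, mul_comm, Function.comp_def] using (Real.hasDerivAt_log hne).comp x h3
    -- quotient part
    have hdiv : HasDerivAt (fun θ : ℝ => Real.log (1 + δ * sin (θhat - θ) ^ 2) / sin (θhat - θ))
        (((δ * (2 * s * (-cos (θhat - x)))) / (1 + δ * s ^ 2) * s -
          Real.log (1 + δ * s ^ 2) * (-cos (θhat - x))) / s ^ 2) x :=
      hlog.div hsin hsne
    have hcomb : HasDerivAt F _ x := ((harctan.const_mul (2 * Real.sqrt δ)).sub hdiv).neg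
    convert hcomb using 1
    have hsq' : (Real.sqrt δ * s) ^ 2 = δ * s ^ 2 := by
      rw [mul_pow]; rw [sq, hsq]
    rw [hsq']
    field_simp
    ring_nf
    rw [Real.sq_sqrt hδ.le]
    ring
  have hcont : ContinuousOn
      (fun θ => Real.log (1 + δ * sin (θhat - θ) ^ 2) * (cos (θhat - θ) / sin (θhat - θ) ^ 2))
      (Set.Icc 0 θk) := by
    apply ContinuousOn.mul
    · apply ContinuousOn.log
      · fun_prop
      · intro x hx
        have := hsinpos x hx
        positivity
    · apply ContinuousOn.div
      · fun_prop
      · fun_prop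
      · intro x hx
        have := hsinpos x hx
        positivity
  have huIcc : Set.uIcc (0:ℝ) θk = Set.Icc 0 θk := Set.uIcc_of_le hθk.le
  have hint := intervalIntegral.integral_eq_sub_of_hasDerivAt
    (fun x hx => key x (huIcc ▸ hx))
    ((hcont.intervalIntegrable_of_Icc hθk.le))
  rw [hint, hF]
  have h0 : 0 < sin θhat := by
    simpa using hsinpos 0 ⟨le_refl 0, hθk.le⟩
  have hk : 0 < sin (θhat - θk) := hsinpos θk ⟨hθk.le, le_refl θk⟩
  rw [hG _ h0, hG _ hk]
  simp
  ring
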